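/- Let c₁ > 0, let ω_m : ℝ → ℝ³ be continuous, let b̂ : ℝ → ℝ³ be continuous, let b^g ∈ ℝ³, and let q, q̂ : ℝ → ℍ be differentiable with q̂(t) ≠ 0 for all t, satisfying dq/dt = (1/2) q ⊗ (0, ω_m − b^g) and dq̂/dt = (1/2) q̂ ⊗ ((0, ω_m − b̂) + 2c₁ (1 − |q_e°|, sgn(q_e°) q⃗_e)), where q_e = q̂⁻¹ ⊗ q. Then the vector part of the error quaternion satisfies (d/dt) q⃗_e = q⃗_e × ω_m − (1/2) q⃗_e × (b^g + b̂) − (1/2) q_e° (b^g − b̂) − c₁ q⃗_e. -/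

import Mathlib

open Filter Real Topology

noncomputable section

/-- ℝ³ with the Euclidean norm. -/
abbrev E3 := EuclideanSpace ℝ (Fin 3)

/-- Cross product on ℝ³. -/
def cross (u v : E3) : E3 :=
  WithLp.toLp 2 ![u 1 * v 2 - u 2 * v 1, u 2 * v 0 - u 0 * v 2, u 0 * v 1 - u 1 * v 0]

/-- The quaternion with real (scalar) part `a` and vector (imaginary) part `v`. -/
def quat (a : ℝ) (v : E3) : Quaternion ℝ := ⟨a, v 0, v 1, v 2⟩

/-- The vector (imaginary) part of a quaternion, as an element of ℝ³. -/
def qvec (q : Quaternion ℝ) : E3 := WithLp.toLp 2 ![q.imI, q.imJ, q.imK]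


lemma sign_mul_self' (x : ℝ) : Real.sign x * x = |x| := by
  rcases lt_trichotomy x 0 with h|h|h
  · simp [Real.sign_of_neg h, abs_of_neg h]
  · simp [h]
  · simp [Real.sign_of_pos h, abs_of_pos h]

def qvecL : Quaternion ℝ →L[ℝ] E3 :=
  LinearMap.toContinuousLinearMap
  { toFun := qvec
    map_add' := by intro a b; ext i; fin_cases i <;> simp [qvec]
    map_smul' := by intro c a; ext i; fin_cases i <;> simp [qvec] }

@[simp] lemma qvecL_apply (q : Quaternion ℝ) : qvecL q = qvec q := rfl

lemma aux_rearrange (x y A C : Quaternion ℝ) (hx : x ≠ 0) :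
    (-(x⁻¹ * ((2⁻¹ : ℝ) • (x * A)) * x⁻¹)) * y + x⁻¹ * ((2⁻¹ : ℝ) • (y * C)) =
    (2⁻¹ : ℝ) • ((x⁻¹ * y) * C) - (2⁻¹ : ℝ) • (A * (x⁻¹ * y)) := by
  have h1 : x⁻¹ * ((2⁻¹ : ℝ) • (x * A)) * x⁻¹ = (2⁻¹ : ℝ) • (A * x⁻¹) := by
    rw [mul_smul_comm, smul_mul_assoc, ← mul_assoc, inv_mul_cancel₀ hx, one_mul]
  rw [h1, neg_mul, smul_mul_assoc, mul_assoc, mul_smul_comm, ← mul_assoc,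
    ← mul_assoc x⁻¹ y C, neg_add_eq_sub]


/-- Vector-part error kinematics of the geometric orientation observer:
if `q̇ = (1/2) q ⊗ (0, ω_m − b^g)` and
`q̂̇ = (1/2) q̂ ⊗ ((0, ω_m − b̂) + 2c₁ (1 − |q_e°|, sgn(q_e°) q⃗_e))` with `q_e = q̂⁻¹ ⊗ q`,
then `(d/dt) q⃗_e = q⃗_e × ω_m − (1/2) q⃗_e × (b^g + b̂) − (1/2) q_e° (b^g − b̂) − c₁ q⃗_e`. -/
theorem stmt_15 (c₁ : ℝ) (hc₁ : 0 < c₁)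
    (ωm bh : ℝ → E3) (hωm : Continuous ωm) (hbh : Continuous bh) (bg : E3)
    (q qh : ℝ → Quaternion ℝ) (hq : Differentiable ℝ q) (hqh : Differentiable ℝ qh)
    (hne : ∀ t, qh t ≠ 0)
    (hqdot : ∀ t, HasDerivAt q ((2⁻¹ : ℝ) • (q t * quat 0 (ωm t - bg))) t)
    (hqhdot : ∀ t, HasDerivAt qh
      ((2⁻¹ : ℝ) • (qh t *
        (quat 0 (ωm t - bh t) +
          (2 * c₁) • quat (1 - |((qh t)⁻¹ * q t).re|)
            (Real.sign ((qh t)⁻¹ * q t).re • qvec ((qh t)⁻¹ * q t))))) t) :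
    ∀ t, HasDerivAt (fun s => qvec ((qh s)⁻¹ * q s))
      (cross (qvec ((qh t)⁻¹ * q t)) (ωm t)
        - (2⁻¹ : ℝ) • cross (qvec ((qh t)⁻¹ * q t)) (bg + bh t)
        - (((qh t)⁻¹ * q t).re / 2) • (bg - bh t)
        - c₁ • qvec ((qh t)⁻¹ * q t)) t := by
  intro t
  have hinv : HasDerivAt (fun s => (qh s)⁻¹)
      (-((qh t)⁻¹ * ((2⁻¹ : ℝ) • (qh t *
        (quat 0 (ωm t - bh t) +
          (2 * c₁) • quat (1 - |((qh t)⁻¹ * q t).re|)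
            (Real.sign ((qh t)⁻¹ * q t).re • qvec ((qh t)⁻¹ * q t))))) * (qh t)⁻¹)) t := by
    have h0 := (hasFDerivAt_inv' (𝕜 := ℝ) (hne t)).comp_hasDerivAt t (hqhdot t)
    rw [ContinuousLinearMap.neg_apply, ContinuousLinearMap.mulLeftRight_apply] at h0
    exact h0
  have hqe : HasDerivAt (fun s => (qh s)⁻¹ * q s)
      ((2⁻¹ : ℝ) • (((qh t)⁻¹ * q t) * quat 0 (ωm t - bg))
        - (2⁻¹ : ℝ) • ((quat 0 (ωm t - bh t) +
            (2 * c₁) • quat (1 - |((qh t)⁻¹ * q t).re|)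
              (Real.sign ((qh t)⁻¹ * q t).re • qvec ((qh t)⁻¹ * q t)))
          * ((qh t)⁻¹ * q t))) t := by
    have h := hinv.mul (hqdot t)
    rw [aux_rearrange _ _ _ _ (hne t)] at h
    exact h
  have hmain := (qvecL.hasFDerivAt).comp_hasDerivAt t hqe
  refine (hmain : HasDerivAt (fun s => qvec ((qh s)⁻¹ * q s)) _ t).congr_deriv ?_
  have hsgn := sign_mul_self' ((qh t)⁻¹ * q t).re
  rw [← hsgn]
  ext i
  fin_cases i <;>
  · simp [cross, qvec, Quaternion.re_mul, Quaternion.imI_mul,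
      Quaternion.imJ_mul, Quaternion.imK_mul, Quaternion.imI_add, Quaternion.imJ_add,
      Quaternion.imK_add, Quaternion.imI_smul, Quaternion.imJ_smul, Quaternion.imK_smul,
      PiLp.smul_apply, PiLp.add_apply, PiLp.sub_apply, smul_eq_mul]
    simp [quat]
    ring
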